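/- For any symmetric trace-free 4×4 real matrix E, tr(E³) ≥ -(1/√3)·|E|³, where |E|² = Σᵢⱼ Eᵢⱼ². -/

import Mathlib

open Matrix

lemma scalar_ineq (a b c d : ℝ) (h : a + b + c + d = 0) :
    3 * (a^3 + b^3 + c^3 + d^3)^2 ≤ (a^2 + b^2 + c^2 + d^2)^3 := by
  have hd : d = -(a + b + c) := by linarith
  subst hd
  have key : ∀ u v w : ℝ, 0 ≤ u → 0 ≤ v → 0 ≤ w → 27 * (u * v * w) ≤ (u + v + w)^3 := by
    intro u v w hu hv hw
    nlinarith [sq_nonneg (u - v), sq_nonneg (v - w), sq_nonneg (u - w), mul_nonneg hu hv,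
      mul_nonneg hv hw, mul_nonneg hu hw]
  have := key ((a+b)^2) ((b+c)^2) ((c+a)^2) (sq_nonneg _) (sq_nonneg _) (sq_nonneg _)
  nlinarith [this]

lemma conj_pow' {n : Type*} [Fintype n] [DecidableEq n] (U D : Matrix n n ℝ)
    (h1 : star U * U = 1) (h2 : U * star U = 1) (k : ℕ) :
    (U * D * star U) ^ k = U * D ^ k * star U := by
  induction k with
  | zero => simpa using h2.symm
  | succ m ih =>
    rw [pow_succ, pow_succ, ih]
    calc U * D ^ m * star U * (U * D * star U)
        = U * D ^ m * (star U * U) * D * star U := by noncomm_ring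
      _ = U * (D ^ m * D) * star U := by rw [h1]; noncomm_ring

lemma trace_pow_eq (E : Matrix (Fin 4) (Fin 4) ℝ) (hE : E.IsHermitian) (k : ℕ) :
    (E ^ k).trace = ∑ i, hE.eigenvalues i ^ k := by
  have hU := (Matrix.mem_unitaryGroup_iff').mp (hE.eigenvectorUnitary).2
  have hU2 := (Matrix.mem_unitaryGroup_iff).mp (hE.eigenvectorUnitary).2
  have hspec := hE.spectral_theorem
  calc (E ^ k).trace
      = ((hE.eigenvectorUnitary : Matrix (Fin 4) (Fin 4) ℝ) *
          (diagonal (RCLike.ofReal ∘ hE.eigenvalues)) ^ k *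
          star (hE.eigenvectorUnitary : Matrix (Fin 4) (Fin 4) ℝ)).trace := by
        conv_lhs => rw [hspec, Unitary.conjStarAlgAut_apply]
        rw [conj_pow' _ _ hU hU2]
    _ = ∑ i, hE.eigenvalues i ^ k := by
        rw [trace_mul_cycle, hU, one_mul, diagonal_pow, trace_diagonal]
        simp [RCLike.ofReal]

theorem trace_cube_ge_neg_norm_cubed
    (E : Matrix (Fin 4) (Fin 4) ℝ) (hE : E.IsSymm)
    (htr : E.trace = 0) :
    (E ^ 3).trace ≥
      -(1 / Real.sqrt 3) * (Real.sqrt (∑ i, ∑ j, (E i j) ^ 2)) ^ 3 := by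
  have hE' : E.IsHermitian := by
    rw [Matrix.IsHermitian, conjTranspose]
    ext i j; simp [hE.apply i j]
  set μ := hE'.eigenvalues with hμ
  -- Frobenius norm squared equals trace of E^2
  have hfrob : (∑ i, ∑ j, (E i j) ^ 2) = (E ^ 2).trace := by
    rw [pow_two, Matrix.trace, Finset.sum_congr rfl]
    intro i _
    rw [Matrix.diag, Matrix.mul_apply]
    refine Finset.sum_congr rfl fun j _ => ?_
    rw [hE.apply, sq]
  have h1 : ∑ i, μ i = 0 := by
    have e1 := trace_pow_eq E hE' 1
    simp only [pow_one] at e1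
    rw [← e1, htr]
  have h2 : (E ^ 2).trace = ∑ i, μ i ^ 2 := trace_pow_eq E hE' 2
  have h3 : (E ^ 3).trace = ∑ i, μ i ^ 3 := trace_pow_eq E hE' 3
  set s : ℝ := ∑ i, μ i ^ 2 with hs
  set T : ℝ := ∑ i, μ i ^ 3 with hT
  have hkey : 3 * T^2 ≤ s^3 := by
    have := scalar_ineq (μ 0) (μ 1) (μ 2) (μ 3) (by
      have := h1; rw [Fin.sum_univ_four] at this; linarith)
    rw [hs, hT, Fin.sum_univ_four, Fin.sum_univ_four]
    exact this
  have hsnn : 0 ≤ s := Finset.sum_nonneg fun i _ => sq_nonneg _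
  rw [h3, hfrob, h2]
  have hu : Real.sqrt s ^ 2 = s := Real.sq_sqrt hsnn
  have hv : Real.sqrt 3 ^ 2 = 3 := Real.sq_sqrt (by norm_num)
  have hvpos : (0:ℝ) < Real.sqrt 3 := Real.sqrt_pos.mpr (by norm_num)
  have hunn : 0 ≤ Real.sqrt s := Real.sqrt_nonneg _
  set u := Real.sqrt s
  set v := Real.sqrt 3
  have goal : v * T + u^3 ≥ 0 := by
    by_contra hc
    push_neg at hc
    have h6 : u^6 = s^3 := by rw [show (6:ℕ) = 2*3 by norm_num, pow_mul, hu]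
    nlinarith [pow_nonneg hunn 3, mul_pos hvpos hvpos, sq_nonneg (u^3 - v*T),
      mul_nonneg (pow_nonneg hunn 3) (pow_nonneg hunn 3)]
  rw [ge_iff_le, neg_mul, neg_le]
  calc -(T) ≤ u^3 / v := by
        rw [le_div_iff₀ hvpos]; nlinarith [goal]
    _ = 1 / v * u ^ 3 := by ring
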